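/- Let k be an ordered field and G an ordered abelian group such that the residue field k is 2-euclidean (every positive element is a square) and G is 2-divisible. Then in the Hahn field k((G)) with valuation v = v_min, an element a is nonnegative if and only if a = 0 or there exists y with v(a − y²) > v(a). Consequently, the ordering of k((G)) is definable without parameters in the language of valued fields. -/

import Mathlib

/-- Let `k` be a 2-euclidean ordered field (every positive element is a square) and `G` a
2-divisible ordered abelian group. In the Hahn field `k((G))` with canonical valuation
`v = v_min` (here `orderTop`, with `v(0) = ⊤`), an element `a` is nonnegative (i.e. `a = 0`
or its leading coefficient is positive) if and only if `a = 0` or there is `y` with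
`v(a - y²) > v(a)`. (Hence the ordering is `∅`-definable in the language of valued fields.) -/
theorem stmt_17 {k G : Type*} [Field k] [LinearOrder k] [IsStrictOrderedRing k]
    [AddCommGroup G] [LinearOrder G] [IsOrderedAddMonoid G]
    (heuclid : ∀ x : k, 0 < x → ∃ y : k, y ^ 2 = x)
    (hdiv : ∀ g : G, ∃ h : G, h + h = g) :
    ∀ a : HahnSeries G k,
      (a = 0 ∨ 0 < a.leadingCoeff) ↔
      (a = 0 ∨ ∃ y : HahnSeries G k, a.orderTop < (a - y ^ 2).orderTop) := by
  intro a
  constructor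
  · rintro (rfl | hc)
    · exact Or.inl rfl
    have ha : a ≠ 0 := fun h => by simp [h] at hc
    obtain ⟨r, hr⟩ := heuclid _ hc
    obtain ⟨h, hh⟩ := hdiv a.order
    refine Or.inr ⟨HahnSeries.single h r, ?_⟩
    have hy2 : (HahnSeries.single h r : HahnSeries G k) ^ 2
        = HahnSeries.single a.order a.leadingCoeff := by
      rw [sq, HahnSeries.single_mul_single, hh, ← sq, hr]
    rw [hy2]
    set s := a - HahnSeries.single a.order a.leadingCoeff with hs
    have hcoeff : ∀ g, g ≤ a.order → s.coeff g = 0 := by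
      intro g hg
      rcases lt_or_eq_of_le hg with hlt | rfl
      · simp [hs, HahnSeries.coeff_sub, HahnSeries.coeff_eq_zero_of_lt_order hlt,
          HahnSeries.coeff_single_of_ne (ne_of_lt hlt)]
      · simp [hs, HahnSeries.coeff_sub, HahnSeries.coeff_single_same,
          ← HahnSeries.leadingCoeff_eq]
    by_cases hs0 : s = 0
    · rw [hs0]
      simp [HahnSeries.orderTop_of_ne_zero ha]
    · rw [← HahnSeries.order_eq_orderTop_of_ne_zero ha, ← HahnSeries.order_eq_orderTop_of_ne_zero hs0,
        WithTop.coe_lt_coe]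
      by_contra hle
      push_neg at hle
      have := hcoeff s.order hle
      rw [← HahnSeries.leadingCoeff_eq] at this
      exact hs0 (HahnSeries.leadingCoeff_eq_zero.mp this)
  · rintro (rfl | ⟨y, hy⟩)
    · exact Or.inl rfl
    by_cases ha : a = 0
    · exact Or.inl ha
    refine Or.inr ?_
    have hy0 : y ≠ 0 := by
      rintro rfl
      simp at hy
    have key : (y ^ 2).leadingCoeff = a.leadingCoeff := by
      have := HahnSeries.leadingCoeff_sub hy
      simpa using this
    have hsq : (y ^ 2).leadingCoeff = y.leadingCoeff * y.leadingCoeff := by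
      rw [sq, HahnSeries.leadingCoeff_eq, HahnSeries.order_mul hy0 hy0,
        HahnSeries.coeff_mul_order_add_order]
    rw [← key, hsq]
    exact mul_self_pos.mpr (HahnSeries.leadingCoeff_ne_zero.mpr hy0)
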